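/- arXiv:1312.0911 — 2 statements merged into one kernel-verified Lean document; each statement's English description precedes it below -/
import Mathlib

section
/- Let r be an integer, let f be a modular form of weight r for the full modular group SL₂(ℤ), and let m ≥ 1 and k be integers. Define g : ℍ → ℂ on the upper half-plane by g(z) = (1/m) Σ_{j=0}^{m−1} e^{−2πi jk/m} f(z + j/m). Then g is (the function of) a modular form of weight r for the congruence subgroup Γ₁(m²); that is, there exists a modular form G of weight r and level Γ₁(m²) with G(z) = g(z) for all z ∈ ℍ. (If f has q-expansion Σ_{n≥0} a_n q^n, then g has q-expansion Σ_{n ≡ k (mod m)} a_n q^n, i.e., g is the sieved series f_{m,k}.) -/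
open UpperHalfPlane ModularForm Complex Real

open Matrix
open scoped ModularForm MatrixGroups UpperHalfPlane Manifold

set_option synthInstance.maxHeartbeats 1000000
set_option maxHeartbeats 1600000

noncomputable section

namespace SieveAux

/-- Build an element of `GL(2,ℝ)⁺` from a matrix with positive determinant. -/
def glPos (M : Matrix (Fin 2) (Fin 2) ℝ) (h : 0 < M.det) : GL (Fin 2) ℝ :=
  Matrix.GeneralLinearGroup.mkOfDetNeZero M h.ne'

@[simp] lemma glPos_coe (M : Matrix (Fin 2) (Fin 2) ℝ) (h : 0 < M.det) :
    ((glPos M h : GL (Fin 2) ℝ) : Matrix (Fin 2) (Fin 2) ℝ) = M := rfl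

def trGL (t : ℝ) : GL (Fin 2) ℝ := glPos !![1, t; 0, 1] (by simp [Matrix.det_fin_two_of])

@[simp] lemma trGL_coe (t : ℝ) : ((trGL t : GL (Fin 2) ℝ) : Matrix (Fin 2) (Fin 2) ℝ) = !![1, t; 0, 1] := rfl

lemma trGL_det (t : ℝ) : (trGL t).det.val = 1 := by
  rw [Matrix.GeneralLinearGroup.val_det_apply, trGL_coe]
  simp [Matrix.det_fin_two_of]

lemma trGL_smul (t : ℝ) (z : ℍ) : trGL t • z = t +ᵥ z := by
  have h := UpperHalfPlane.coe_smul_of_det_pos (g := trGL t) (by rw [trGL_det]; norm_num) z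
  have h0 : (trGL t) 1 0 = 0 := rfl
  have h1 : (trGL t) 1 1 = 1 := rfl
  have h2 : (trGL t) 0 0 = 1 := rfl
  have h3 : (trGL t) 0 1 = t := rfl
  rw [num, denom, h0, h1, h2, h3] at h
  ext
  rw [h, UpperHalfPlane.coe_vadd]
  push_cast
  ring

lemma denom_trGL (t : ℝ) (z : ℍ) : denom (trGL t) z = 1 := by
  have h0 : (trGL t) 1 0 = 0 := rfl
  have h1 : (trGL t) 1 1 = 1 := rfl
  simp [denom, h0, h1]

lemma slash_trGL (r : ℤ) (g : ℍ → ℂ) (t : ℝ) (z : ℍ) :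
    (g ∣[r] trGL t) z = g (t +ᵥ z) := by
  rw [ModularForm.slash_apply, trGL_smul, denom_trGL, trGL_det]
  simp [σ]

lemma gamma1_conj (m j : ℕ) (hm : 1 ≤ m) (γ : SL(2, ℤ))
    (hγ : γ ∈ CongruenceSubgroup.Gamma1 (m ^ 2)) :
    ∃ γ' : SL(2, ℤ), trGL ((j : ℝ) / m) * Matrix.SpecialLinearGroup.mapGL ℝ γ = Matrix.SpecialLinearGroup.mapGL ℝ γ' * trGL ((j : ℝ) / m) := by
  have hm0 : (m : ℝ) ≠ 0 := Nat.cast_ne_zero.2 (by omega)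
  set a : ℤ := γ 0 0 with ha
  set b : ℤ := γ 0 1 with hb
  set c : ℤ := γ 1 0 with hc
  set d : ℤ := γ 1 1 with hd
  have hdet : a * d - b * c = 1 := by
    have := γ.2
    rw [Matrix.det_fin_two] at this
    exact this
  rw [CongruenceSubgroup.Gamma1_mem] at hγ
  obtain ⟨h1, h2, h3⟩ := hγ
  have hdc : (((m ^ 2 : ℕ) : ℤ)) ∣ c := by
    rwa [← ZMod.intCast_zmod_eq_zero_iff_dvd]
  have hda : (((m ^ 2 : ℕ) : ℤ)) ∣ (d - a) := by
    rw [← ZMod.intCast_zmod_eq_zero_iff_dvd]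
    push_cast
    rw [← ha, ← hd] at *
    rw [h2, h1]
    ring
  obtain ⟨P, hP⟩ := hdc
  obtain ⟨Q, hQ⟩ := hda
  have hP' : c = (m : ℤ) ^ 2 * P := by rw [hP]; push_cast; ring
  have hQ' : d - a = (m : ℤ) ^ 2 * Q := by rw [hQ]; push_cast; ring
  refine ⟨⟨!![a + j * m * P, b + j * m * Q - j ^ 2 * P; (m : ℤ) ^ 2 * P, d - j * m * P], by
    rw [Matrix.det_fin_two_of]
    linear_combination hdet + b * hP' + (j : ℤ) * m * P * hQ'⟩, ?_⟩
  have hAM : ((γ : Matrix (Fin 2) (Fin 2) ℤ).map (Int.cast : ℤ → ℝ))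
      = !![(a : ℝ), b; c, d] := by
    ext i jj
    fin_cases i <;> fin_cases jj <;> simp [Matrix.map_apply, ha, hb, hc, hd]
  have hPr : (c : ℝ) = (m : ℝ) ^ 2 * P := by exact_mod_cast congrArg (Int.cast : ℤ → ℝ) hP'
  have hQr : (d : ℝ) - a = (m : ℝ) ^ 2 * Q := by exact_mod_cast congrArg (Int.cast : ℤ → ℝ) hQ'
  have hmat : (!![1, (j : ℝ) / m; 0, 1] : Matrix (Fin 2) (Fin 2) ℝ) * !![(a : ℝ), b; c, d]
      = (!![(a : ℝ) + j * m * P, b + j * m * Q - j ^ 2 * P; (m : ℝ) ^ 2 * P, d - j * m * P])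
        * !![1, (j : ℝ) / m; 0, 1] := by
    ext i jj
    fin_cases i <;> fin_cases jj <;>
      simp only [Matrix.mul_apply, Fin.sum_univ_two, Matrix.cons_val_zero, Matrix.cons_val_one,
        Matrix.head_cons, Matrix.head_fin_const, Matrix.cons_val', Matrix.empty_val',
        Matrix.cons_val_fin_one, Matrix.of_apply, Fin.zero_eta, Fin.mk_one]
    · field_simp
      linear_combination (j : ℝ) * hPr
    · field_simp
      linear_combination (j : ℝ) * hQr
    · field_simp
      linear_combination hPr
    · field_simp
      ring
  apply Units.ext
  rw [Units.val_mul, Units.val_mul]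
  have hcoe : ∀ (S : SL(2, ℤ)), ((Matrix.SpecialLinearGroup.mapGL ℝ S : GL (Fin 2) ℝ) : Matrix (Fin 2) (Fin 2) ℝ)
      = (S : Matrix (Fin 2) (Fin 2) ℤ).map (Int.cast : ℤ → ℝ) := fun S => rfl
  rw [hcoe γ, hcoe ⟨_, _⟩, hAM]
  have h2' : ((!![a + j * m * P, b + j * m * Q - j ^ 2 * P; (m : ℤ) ^ 2 * P, d - j * m * P]
      : Matrix (Fin 2) (Fin 2) ℤ).map (Int.cast : ℤ → ℝ))
      = !![(a : ℝ) + j * m * P, b + j * m * Q - j ^ 2 * P; (m : ℝ) ^ 2 * P, d - j * m * P] := by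
    ext i jj
    fin_cases i <;> fin_cases jj <;> (simp [Matrix.map_apply]; try push_cast; try ring)
  rw [show ((⟨!![a + j * m * P, b + j * m * Q - j ^ 2 * P; (m : ℤ) ^ 2 * P, d - j * m * P], _⟩
      : SL(2, ℤ)) : Matrix (Fin 2) (Fin 2) ℤ)
      = !![a + j * m * P, b + j * m * Q - j ^ 2 * P; (m : ℤ) ^ 2 * P, d - j * m * P] from rfl]
  rw [h2']
  rw [trGL_coe]
  exact hmat


def translate (r : ℤ) (f : ModularForm (⊤ : Subgroup (Matrix.SpecialLinearGroup (Fin 2) ℤ)) r)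
    (m : ℕ) (hm : 1 ≤ m) (j : ℕ) :
    ModularForm (CongruenceSubgroup.Gamma1 (m ^ 2)) r where
  toFun := ⇑f ∣[r] trGL ((j : ℝ) / m)
  slash_action_eq' := by
    intro γ hγ
    obtain ⟨γ0, hγ0, rfl⟩ := Subgroup.mem_map.1 hγ
    obtain ⟨γ', hγ'⟩ := gamma1_conj m j hm γ0 hγ0
    rw [← SlashAction.slash_mul, hγ', SlashAction.slash_mul]
    congr 1
    exact f.slash_action_eq' _ (Subgroup.mem_map_of_mem _ (Subgroup.mem_top γ'))
  holo' := f.holo'.slash r _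
  bdd_at_cusps' := by
    intro c hc γ hγ
    rw [← SlashAction.slash_mul, ← OnePoint.isBoundedAt_infty_iff, ← OnePoint.IsBoundedAt.smul_iff]
    apply f.bdd_at_cusps'
    rw [mul_smul, hγ]
    refine (hc.smul (trGL ((j : ℝ) / m))).mono ?_
    intro x hx
    obtain ⟨y, hy, rfl⟩ := (Subgroup.mem_smul_pointwise_iff_exists _ _ _).1 hx
    obtain ⟨γ0, hγ0, rfl⟩ := Subgroup.mem_map.1 hy
    obtain ⟨γ', hγ'⟩ := gamma1_conj m j hm γ0 hγ0
    rw [ConjAct.toConjAct_smul, hγ', mul_inv_cancel_right]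
    exact Subgroup.mem_map_of_mem _ (Subgroup.mem_top γ')

@[simp] lemma translate_apply (r : ℤ)
    (f : ModularForm (⊤ : Subgroup (Matrix.SpecialLinearGroup (Fin 2) ℤ)) r)
    (m : ℕ) (hm : 1 ≤ m) (j : ℕ) (z : ℍ) :
    translate r f m hm j z = f (((j : ℝ) / m) +ᵥ z) :=
  slash_trGL r (⇑f) ((j : ℝ) / m) z

end SieveAux

end

open SieveAux in
/-- If `f` is a modular form of weight `r` for the full modular group `SL₂(ℤ)`,
then the sieved function `g(z) = (1/m) Σ_{j=0}^{m−1} e^{−2πijk/m} f(z + j/m)` is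
(the function of) a modular form of weight `r` for the congruence subgroup `Γ₁(m²)`. -/
theorem sieve_modularForm (r : ℤ) (f : ModularForm (⊤ : Subgroup (Matrix.SpecialLinearGroup (Fin 2) ℤ)) r)
    (m : ℕ) (hm : 1 ≤ m) (k : ℤ) :
    ∃ G : ModularForm (CongruenceSubgroup.Gamma1 (m ^ 2)) r, ∀ z : UpperHalfPlane,
      G z = (m : ℂ)⁻¹ * ∑ j ∈ Finset.range m,
        Complex.exp (-2 * Real.pi * Complex.I * (j : ℂ) * (k : ℂ) / (m : ℂ)) *
          f (((j : ℝ) / (m : ℝ)) +ᵥ z) := by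
  refine ⟨(m : ℂ)⁻¹ • ∑ j ∈ Finset.range m,
      Complex.exp (-2 * Real.pi * Complex.I * (j : ℂ) * (k : ℂ) / (m : ℂ)) •
        SieveAux.translate r f m hm j, fun z => ?_⟩
  have hsum : (⇑(∑ j ∈ Finset.range m,
      Complex.exp (-2 * Real.pi * Complex.I * (j : ℂ) * (k : ℂ) / (m : ℂ)) •
        SieveAux.translate r f m hm j) : ℍ → ℂ)
      = ∑ j ∈ Finset.range m, Complex.exp (-2 * Real.pi * Complex.I * (j : ℂ) * (k : ℂ) / (m : ℂ)) •
          ⇑(SieveAux.translate r f m hm j) := by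
    have h0 := map_sum (FunLike.coeAddMonoidHom (ModularForm (CongruenceSubgroup.Gamma1 (m ^ 2)) r) ℍ ℂ)
      (fun j : ℕ => Complex.exp (-2 * Real.pi * Complex.I * (j : ℂ) * (k : ℂ) / (m : ℂ)) •
        SieveAux.translate r f m hm j) (Finset.range m)
    simp only [FunLike.coeAddMonoidHom_apply, FunLike.coe_smul] at h0
    exact h0
  rw [ModularForm.coe_smul, Pi.smul_apply, hsum, Finset.sum_apply, smul_eq_mul]
  congr 1
  refine Finset.sum_congr rfl fun j hj => ?_
  rw [Pi.smul_apply, smul_eq_mul, SieveAux.translate_apply]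
end

section
/- Let B be the symmetric bilinear form on ℤ¹⁰ given by B(x,y) = x₀y₀ − Σ_{i=1}^{9} x_i y_i, let v = 3e₀ − e₁ − ⋯ − e₉ and w = e₁. For every nonzero x ∈ ℤ¹⁰ with B(x,v) = 0 and B(x,w) = 0, one has B(x,x) ≤ −2. (The orthogonal complement of the section and fibre classes in Γ_{1,9} is negative definite, and being even, every nonzero vector in it has square at most −2.) -/
set_option maxHeartbeats 1000000


/-- The intersection form of `Γ_{1,9}`: `B(x,y) = x₀y₀ − Σ_{i=1}^{9} x_i y_i`. -/
def B19 (x y : Fin 10 → ℤ) : ℤ :=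
  x 0 * y 0 - ∑ i : Fin 9, x i.succ * y i.succ

/-- The fibre class `v = 3e₀ − e₁ − ⋯ − e₉`. -/
def fibreClass : Fin 10 → ℤ := fun i => if i = 0 then 3 else -1

/-- The section class `w = e₁`. -/
def sectionClass : Fin 10 → ℤ := fun i => if i = 1 then 1 else 0

/-- The orthogonal complement of the section and fibre classes in `Γ_{1,9}` is
negative definite and even: every nonzero `x` with `B(x,v) = 0` and `B(x,w) = 0`
has `B(x,x) ≤ −2`. -/
theorem orthogonal_complement_neg_def (x : Fin 10 → ℤ) (hx : x ≠ 0)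
    (hv : B19 x fibreClass = 0) (hw : B19 x sectionClass = 0) :
    B19 x x ≤ -2 := by
  have hB : B19 x x = x 0 * x 0 - (x 1 * x 1 + x 2 * x 2 + x 3 * x 3 + x 4 * x 4 + x 5 * x 5
      + x 6 * x 6 + x 7 * x 7 + x 8 * x 8 + x 9 * x 9) := by
    simp [B19, Fin.sum_univ_succ, Fin.succ, Fin.ext_iff]
    ring
  simp [B19, fibreClass, sectionClass, Fin.sum_univ_succ, Fin.succ, Fin.ext_iff, -Fin.val_eq_zero_iff] at hv hw
  rw [hB]
  set a0 := x 0
  set a1 := x 1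
  set a2 := x 2
  set a3 := x 3
  set a4 := x 4
  set a5 := x 5
  set a6 := x 6
  set a7 := x 7
  set a8 := x 8
  set a9 := x 9
  have hw' : a1 = 0 := by linarith
  have hv' : 3 * a0 + (a2 + a3 + a4 + a5 + a6 + a7 + a8 + a9) = 0 := by linarith
  -- the sum of squares of a2..a9 is positive since x ≠ 0
  have hSpos : 1 ≤ a2^2 + a3^2 + a4^2 + a5^2 + a6^2 + a7^2 + a8^2 + a9^2 := by
    by_contra h
    push_neg at h
    have q2 := sq_nonneg a2
    have q3 := sq_nonneg a3
    have q4 := sq_nonneg a4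
    have q5 := sq_nonneg a5
    have q6 := sq_nonneg a6
    have q7 := sq_nonneg a7
    have q8 := sq_nonneg a8
    have q9 := sq_nonneg a9
    have e2 : a2 = 0 := sq_eq_zero_iff.mp (le_antisymm (by linarith) q2)
    have e3 : a3 = 0 := sq_eq_zero_iff.mp (le_antisymm (by linarith) q3)
    have e4 : a4 = 0 := sq_eq_zero_iff.mp (le_antisymm (by linarith) q4)
    have e5 : a5 = 0 := sq_eq_zero_iff.mp (le_antisymm (by linarith) q5)
    have e6 : a6 = 0 := sq_eq_zero_iff.mp (le_antisymm (by linarith) q6)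
    have e7 : a7 = 0 := sq_eq_zero_iff.mp (le_antisymm (by linarith) q7)
    have e8 : a8 = 0 := sq_eq_zero_iff.mp (le_antisymm (by linarith) q8)
    have e9 : a9 = 0 := sq_eq_zero_iff.mp (le_antisymm (by linarith) q9)
    have e0 : a0 = 0 := by linarith
    apply hx
    funext i
    fin_cases i
    · exact e0
    · exact hw'
    · exact e2
    · exact e3
    · exact e4
    · exact e5
    · exact e6
    · exact e7
    · exact e8
    · exact e9
  -- Cauchy–Schwarz: 9 · B(x,x) ≤ −(sum of squares of a2..a9)
  have hkey : 9 * (a0 * a0 - (a1*a1 + a2*a2 + a3*a3 + a4*a4 + a5*a5 + a6*a6 + a7*a7 + a8*a8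
      + a9*a9)) ≤ -(a2^2 + a3^2 + a4^2 + a5^2 + a6^2 + a7^2 + a8^2 + a9^2) := by
    have h9sq : (3 * a0 + (a2 + a3 + a4 + a5 + a6 + a7 + a8 + a9))^2 = 0 := by rw [hv']; ring
    have ha0 : a0 * (3 * a0 + (a2 + a3 + a4 + a5 + a6 + a7 + a8 + a9)) = 0 := by rw [hv']; ring
    linarith [sq_nonneg (a2-a3), sq_nonneg (a2-a4), sq_nonneg (a2-a5), sq_nonneg (a2-a6),
      sq_nonneg (a2-a7), sq_nonneg (a2-a8), sq_nonneg (a2-a9),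
      sq_nonneg (a3-a4), sq_nonneg (a3-a5), sq_nonneg (a3-a6), sq_nonneg (a3-a7),
      sq_nonneg (a3-a8), sq_nonneg (a3-a9),
      sq_nonneg (a4-a5), sq_nonneg (a4-a6), sq_nonneg (a4-a7), sq_nonneg (a4-a8), sq_nonneg (a4-a9),
      sq_nonneg (a5-a6), sq_nonneg (a5-a7), sq_nonneg (a5-a8), sq_nonneg (a5-a9),
      sq_nonneg (a6-a7), sq_nonneg (a6-a8), sq_nonneg (a6-a9),
      sq_nonneg (a7-a8), sq_nonneg (a7-a9),
      sq_nonneg (a8-a9), hw', hv', h9sq, ha0, sq_nonneg a1]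
  set Bx : ℤ := a0 * a0 - (a1*a1 + a2*a2 + a3*a3 + a4*a4 + a5*a5 + a6*a6 + a7*a7 + a8*a8 + a9*a9)
    with hBx
  have hBneg : 9 * Bx ≤ -1 := by linarith
  -- parity: Bx is even
  have par : ∀ a : ℤ, 2 ∣ (a * a - a) := by
    intro a
    have h : a * a - a = (a - 1) * ((a - 1) + 1) := by ring
    rw [h]
    exact (Int.even_mul_succ_self (a-1)).two_dvd
  have heven : 2 ∣ Bx := by
    obtain ⟨k0, hk0⟩ := par a0
    obtain ⟨k2, hk2⟩ := par a2
    obtain ⟨k3, hk3⟩ := par a3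
    obtain ⟨k4, hk4⟩ := par a4
    obtain ⟨k5, hk5⟩ := par a5
    obtain ⟨k6, hk6⟩ := par a6
    obtain ⟨k7, hk7⟩ := par a7
    obtain ⟨k8, hk8⟩ := par a8
    obtain ⟨k9, hk9⟩ := par a9
    refine ⟨k0 - k2 - k3 - k4 - k5 - k6 - k7 - k8 - k9 + 2 * a0, ?_⟩
    rw [hBx, hw']
    linarith [hk0, hk2, hk3, hk4, hk5, hk6, hk7, hk8, hk9, hv']
  show Bx ≤ -2
  obtain ⟨m, hm⟩ := heven
  omega
end
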